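/- Let a, b be distinct letters. For natural numbers i, j, p with j, p ≥ 1: there exist monoid homomorphisms g, h : A* → A* with g((a^i·b)^p) = a^j and h(a^j) = (a^i·b)^p if and only if j = p. -/
import Mathlib


/-- For `j, p ≥ 1`: there are monoid endomorphisms `g, h` of `A*` with
`g((a^i b)^p) = a^j` and `h(a^j) = (a^i b)^p` iff `j = p`. -/
theorem stmt7 {A : Type*} (a b : A) (hab : a ≠ b) (i j p : ℕ) (hj : 1 ≤ j) (hp : 1 ≤ p) :
    (∃ g h : FreeMonoid A →* FreeMonoid A,
        g (((FreeMonoid.of a) ^ i * FreeMonoid.of b) ^ p) = (FreeMonoid.of a) ^ j ∧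
        h ((FreeMonoid.of a) ^ j) = ((FreeMonoid.of a) ^ i * FreeMonoid.of b) ^ p) ↔
      j = p := by
  classical
  constructor
  · rintro ⟨g, h, hg, hh⟩
    -- length homomorphism gives p ∣ j
    set φ : FreeMonoid A →* Multiplicative ℕ :=
      FreeMonoid.lift (fun _ => Multiplicative.ofAdd (1 : ℕ)) with hφ
    have h1 : φ (g (((FreeMonoid.of a) ^ i * FreeMonoid.of b) ^ p))
        = φ ((FreeMonoid.of a) ^ j) := by rw [hg]
    have h1' : p * Multiplicative.toAdd (φ (g ((FreeMonoid.of a) ^ i * FreeMonoid.of b)))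
        = j * 1 := by
      have := congrArg Multiplicative.toAdd h1
      simpa [map_pow, toAdd_pow, hφ, mul_comm] using this
    -- count-of-b homomorphism gives j ∣ p
    set ψ : FreeMonoid A →* Multiplicative ℕ :=
      FreeMonoid.lift (fun x => Multiplicative.ofAdd (if x = b then (1:ℕ) else 0)) with hψ
    have h2 : ψ (h ((FreeMonoid.of a) ^ j))
        = ψ (((FreeMonoid.of a) ^ i * FreeMonoid.of b) ^ p) := by rw [hh]
    have h2' : j * Multiplicative.toAdd (ψ (h (FreeMonoid.of a))) = p * 1 := by
      have := congrArg Multiplicative.toAdd h2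
      simpa [toAdd_pow, map_pow, map_mul, hψ, hab, mul_comm] using this
    have hpd : p ∣ j :=
      ⟨Multiplicative.toAdd (φ (g ((FreeMonoid.of a) ^ i * FreeMonoid.of b))), by omega⟩
    have hjd : j ∣ p := ⟨Multiplicative.toAdd (ψ (h (FreeMonoid.of a))), by omega⟩
    exact Nat.dvd_antisymm hjd hpd
  · rintro rfl
    refine ⟨FreeMonoid.lift (fun x => if x = b then FreeMonoid.of a else 1),
      FreeMonoid.lift (fun x => if x = a then (FreeMonoid.of a) ^ i * FreeMonoid.of b else 1),
      ?_, ?_⟩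
    · rw [map_pow, map_mul, map_pow]
      simp [hab]
    · rw [map_pow]
      simp
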